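/- Let g : ℕ → {0,1} be a pretentious multiplicative function. Then for every k ≥ 1 and all distinct h₁, …, h_k ∈ ℕ, the limit lim_{x→∞} (1/x) Σ_{n≤x} g(n+h₁)⋯g(n+h_k) exists; equivalently (since g takes values in {0,1}, so all correlations of indicator functions of cylinder sets converge), g has a unique Furstenberg system. -/

import Mathlib

open Filter Finset Topology

noncomputable section

/-- Truncated pretentious distance `𝔻(g₁,g₂; y, x)`:
`(∑_{p prime, y ≤ p ≤ x} (1 - Re(g₁(p) conj(g₂(p))))/p)^{1/2}`. -/
def pretDist (g₁ g₂ : ℕ → ℂ) (y x : ℝ) : ℝ :=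
  Real.sqrt (∑ p ∈ (Finset.range (Nat.floor x + 1)).filter
      (fun p : ℕ => p.Prime ∧ y ≤ (p : ℝ)),
    (1 - (g₁ p * (starRingEnd ℂ) (g₂ p)).re) / p)

/-- `𝔻(g₁,g₂; x) := 𝔻(g₁,g₂; 1, x)`. -/
def pretDistTo (g₁ g₂ : ℕ → ℂ) (x : ℝ) : ℝ := pretDist g₁ g₂ 1 x

/-- The twisted Dirichlet character `n ↦ χ(n) n^{it}`. -/
def charTwist {q : ℕ} (χ : DirichletCharacter ℂ q) (t : ℝ) : ℕ → ℂ :=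
  fun n => χ (n : ZMod q) * (n : ℂ) ^ ((t : ℂ) * Complex.I)

/-- A multiplicative function in the number-theoretic sense. -/
def IsMultFn (f : ℕ → ℂ) : Prop :=
  f 1 = 1 ∧ ∀ m n : ℕ, Nat.Coprime m n → f (m * n) = f m * f n

/-- `f` is pretentious: `𝔻(f, χ(n)n^{it}; ∞) < ∞` for some Dirichlet character `χ`
and real `t`. -/
def IsPretentious (f : ℕ → ℂ) : Prop :=
  ∃ (q : ℕ) (χ : DirichletCharacter ℂ q) (t : ℝ) (C : ℝ),
    ∀ x : ℝ, pretDistTo f (charTwist χ t) x ≤ C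

/-- Upper logarithmic density `δ_log^+`. -/
def upperLogDens (A : Set ℕ) : ℝ :=
  Filter.limsup (fun X : ℕ =>
    (Real.log X)⁻¹ * ∑ n ∈ Finset.Icc 1 X, Set.indicator A (fun n => (n : ℝ)⁻¹) n)
    Filter.atTop

/-- Upper double-logarithmic density `δ_loglog^+`. -/
def upperLogLogDens (A : Set ℕ) : ℝ :=
  Filter.limsup (fun X : ℕ =>
    (Real.log (Real.log X))⁻¹ *
      ∑ n ∈ Finset.Icc 2 X, Set.indicator A (fun n => ((n : ℝ) * Real.log n)⁻¹) n)
    Filter.atTop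

/-- Lower logarithmic density `δ_log^-`. -/
def lowerLogDens (A : Set ℕ) : ℝ :=
  Filter.liminf (fun X : ℕ =>
    (Real.log X)⁻¹ * ∑ n ∈ Finset.Icc 1 X, Set.indicator A (fun n => (n : ℝ)⁻¹) n)
    Filter.atTop

/-- Lower asymptotic density `d^-`. -/
def lowerAsympDens (A : Set ℕ) : ℝ :=
  Filter.liminf (fun X : ℕ =>
    (∑ n ∈ Finset.Icc 1 X, Set.indicator A (fun _ => (1 : ℝ)) n) / X) Filter.atTop

/-- The Cesàro average `(1/x) ∑_{n ≤ x} F(n)`. -/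
def cesaroAvg (F : ℕ → ℂ) (x : ℕ) : ℂ := (∑ n ∈ Finset.Icc 1 x, F n) / x

/-- `inf_{|t| ≤ X^A} min_{χ mod q, q ≤ (log X)^A} 𝔻(f, χ(n)n^{it}; X)²`. -/
def minTwistDist (f : ℕ → ℂ) (A X : ℝ) : ℝ :=
  sInf {d : ℝ | ∃ (t : ℝ) (q : ℕ) (χ : DirichletCharacter ℂ q),
    |t| ≤ X ^ A ∧ (q : ℝ) ≤ (Real.log X) ^ A ∧
    d = (pretDistTo f (charTwist χ t) X) ^ 2}

/-- `f` is moderately non-pretentious. -/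
def ModeratelyNonPretentious (f : ℕ → ℂ) : Prop :=
  ¬ IsPretentious f ∧ ∃ A : ℝ, 1 ≤ A ∧
    Filter.Tendsto (fun X : ℝ => (Real.log (Real.log X))⁻¹ * minTwistDist f A X)
      Filter.atTop (nhds 0)


private lemma abs_charTwist_le_one {q : ℕ} (χ : DirichletCharacter ℂ q) (t : ℝ) {p : ℕ}
    (hp : 0 < p) : ‖charTwist χ t p‖ ≤ 1 := by
  rw [charTwist, norm_mul]
  have h1 : ‖χ (p : ZMod q)‖ ≤ 1 := by
    simpa using DirichletCharacter.norm_le_one χ (p : ZMod q)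
  have h2 : ‖(p : ℂ) ^ ((t : ℂ) * Complex.I)‖ = 1 := by
    rw [show ((p : ℕ) : ℂ) = (((p : ℝ)) : ℂ) by push_cast; ring,
      Complex.norm_cpow_eq_rpow_re_of_pos (by exact_mod_cast hp)]
    simp [Complex.mul_re]
  rw [h2, mul_one]
  exact h1

private lemma term_nonneg (g : ℕ → ℝ) (hvals : ∀ n, g n = 0 ∨ g n = 1) {q : ℕ}
    (χ : DirichletCharacter ℂ q) (t : ℝ) {p : ℕ} (hp : 0 < p) :
    0 ≤ 1 - (((g p : ℂ)) * (starRingEnd ℂ) (charTwist χ t p)).re := by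
  have h := Complex.re_le_norm ((g p : ℂ) * (starRingEnd ℂ) (charTwist χ t p))
  have habs : ‖(g p : ℂ) * (starRingEnd ℂ) (charTwist χ t p)‖ ≤ 1 := by
    rw [norm_mul, Complex.norm_conj]
    have hg : ‖((g p : ℝ) : ℂ)‖ ≤ 1 := by
      rcases hvals p with h' | h' <;> simp [h']
    have := abs_charTwist_le_one χ t hp
    nlinarith [norm_nonneg ((g p : ℝ) : ℂ), norm_nonneg (charTwist χ t p)]
  linarith

private lemma summable_u1 (g : ℕ → ℝ) (hvals : ∀ n, g n = 0 ∨ g n = 1)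
    (hpret : IsPretentious fun n => (g n : ℂ)) :
    Summable (fun p : ℕ => if p.Prime ∧ g p = 0 then (p : ℝ)⁻¹ else 0) := by
  obtain ⟨q, χ, t, C, hC⟩ := hpret
  apply summable_of_sum_range_le (c := C ^ 2)
  · intro n
    split <;> simp [inv_nonneg]
  · intro N
    have hterm : ∀ p ∈ (Finset.range (N + 1)).filter (fun p : ℕ => p.Prime ∧ (1 : ℝ) ≤ (p : ℝ)),
        0 ≤ (1 - (((g p : ℝ) : ℂ) * (starRingEnd ℂ) (charTwist χ t p)).re) / p := by
      intro p hp
      simp only [mem_filter] at hp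
      exact div_nonneg (term_nonneg g hvals χ t hp.2.1.pos) (by positivity)
    have hsub : (Finset.range N).filter (fun p : ℕ => p.Prime ∧ g p = 0) ⊆
        (Finset.range (N + 1)).filter (fun p : ℕ => p.Prime ∧ (1 : ℝ) ≤ (p : ℝ)) := by
      intro p hp
      simp only [mem_filter, mem_range] at hp ⊢
      exact ⟨by omega, hp.2.1, by exact_mod_cast hp.2.1.one_lt.le⟩
    have h1 : ∑ p ∈ Finset.range N, (if p.Prime ∧ g p = 0 then (p : ℝ)⁻¹ else 0)
        = ∑ p ∈ (Finset.range N).filter (fun p : ℕ => p.Prime ∧ g p = 0),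
            (1 - (((g p : ℝ) : ℂ) * (starRingEnd ℂ) (charTwist χ t p)).re) / p := by
      rw [Finset.sum_filter]
      apply Finset.sum_congr rfl
      intro p _
      split
      · next hcond => rw [hcond.2]; simp [one_div]
      · rfl
    rw [h1]
    set S : ℝ := ∑ p ∈ (Finset.range (N + 1)).filter (fun p : ℕ => p.Prime ∧ (1 : ℝ) ≤ (p : ℝ)),
        (1 - (((g p : ℝ) : ℂ) * (starRingEnd ℂ) (charTwist χ t p)).re) / p with hSdef
    have hle : ∑ p ∈ (Finset.range N).filter (fun p : ℕ => p.Prime ∧ g p = 0),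
        (1 - (((g p : ℝ) : ℂ) * (starRingEnd ℂ) (charTwist χ t p)).re) / p ≤ S :=
      Finset.sum_le_sum_of_subset_of_nonneg hsub (fun p hp _ => hterm p hp)
    have hS0 : 0 ≤ S := Finset.sum_nonneg hterm
    have hsqrt : pretDistTo (fun n => ((g n : ℝ) : ℂ)) (charTwist χ t) (N : ℝ) = Real.sqrt S := by
      rw [pretDistTo, pretDist, Nat.floor_natCast]
    have := hC (N : ℝ)
    rw [hsqrt] at this
    nlinarith [Real.sq_sqrt hS0, Real.sqrt_nonneg S]


private lemma sum_tail_le {u : ℕ → ℝ} (hu : ∀ n, 0 ≤ u n) (hs : Summable u) (y : ℕ)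
    (s : Finset ℕ) : ∑ p ∈ s, (if y ≤ p then u p else 0) ≤ ∑' k, u (k + y) := by
  classical
  have hsum : Summable (fun k => u (k + y)) := (summable_nat_add_iff y).2 hs
  have h1 : ∑ p ∈ s, (if y ≤ p then u p else 0) = ∑ p ∈ s.filter (y ≤ ·), u p :=
    (Finset.sum_filter _ _).symm
  have h2 : ∑ p ∈ s.filter (y ≤ ·), u p
      = ∑ k ∈ (s.filter (y ≤ ·)).image (· - y), u (k + y) := by
    rw [Finset.sum_image (by intro a ha b hb hab; simp only [mem_coe, coe_filter, Set.mem_setOf_eq, mem_filter] at ha hb hab; omega)]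
    exact Finset.sum_congr rfl fun p hp => by
      simp only [mem_filter] at hp; congr 1; omega
  rw [h1, h2]
  exact Summable.sum_le_tsum _ (fun _ _ => hu _) hsum

private lemma card_dvd_le (x c d : ℕ) (hd : 0 < d) :
    ((((Finset.Icc 1 x).filter (fun n => d ∣ (n + c))).card : ℝ)) ≤ ((x : ℝ) + c) / d := by
  have h1 : ((Finset.Icc 1 x).filter (fun n => d ∣ (n + c))).card ≤ (x + c) / d := by
    have := Finset.card_le_card_of_injOn (s := (Finset.Icc 1 x).filter (fun n => d ∣ (n + c)))
      (f := fun n => (n + c) / d) (t := Finset.Icc 1 ((x + c) / d)) ?_ ?_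
    · simpa using this
    · intro n hn
      simp only [mem_coe, coe_filter, Set.mem_setOf_eq, mem_filter, mem_Icc] at hn
      obtain ⟨⟨h1n, h2n⟩, hdvd⟩ := hn
      simp only [mem_coe, mem_Icc]
      refine ⟨(Nat.one_le_div_iff hd).2 (Nat.le_of_dvd (by omega) hdvd), Nat.div_le_div_right (by omega)⟩
    · intro a ha b hb hab
      simp only [coe_filter, Set.mem_setOf_eq, mem_Icc] at ha hb
      have ha2 : d * ((a + c) / d) = a + c := Nat.mul_div_cancel' ha.2
      have hb2 : d * ((b + c) / d) = b + c := Nat.mul_div_cancel' hb.2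
      have hab2 : (a + c) / d = (b + c) / d := by simpa using hab
      have : a + c = b + c := by rw [← Nat.mul_div_cancel' ha.2, ← Nat.mul_div_cancel' hb.2, hab2]
      omega
  calc (((Finset.Icc 1 x).filter (fun n => d ∣ (n + c))).card : ℝ)
      ≤ (((x + c) / d : ℕ) : ℝ) := by exact_mod_cast h1
    _ ≤ ((x + c : ℕ) : ℝ) / d := Nat.cast_div_le
    _ = ((x : ℝ) + c) / d := by push_cast; ring

private lemma sum_ite_dvd_le (x c d : ℕ) (hd : 0 < d) :
    ∑ n ∈ Finset.Icc 1 x, (if d ∣ (n + c) then (1 : ℝ) else 0) ≤ ((x : ℝ) + c) / d := by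
  classical
  rw [Finset.sum_boole]
  exact card_dvd_le x c d hd


private def gTrunc (g : ℕ → ℝ) (y m n : ℕ) : ℝ :=
  ∏ p ∈ (Finset.range y).filter Nat.Prime, ∏ a ∈ Finset.Ico 1 m,
    (if p ^ a ∣ n ∧ ¬ p ^ (a + 1) ∣ n then g (p ^ a) else 1)

private lemma gTrunc_nonneg (g : ℕ → ℝ) (hvals : ∀ n, g n = 0 ∨ g n = 1) (y m n : ℕ) :
    0 ≤ gTrunc g y m n := by
  apply Finset.prod_nonneg
  intro p _
  apply Finset.prod_nonneg
  intro a _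
  split
  · rcases hvals (p ^ a) with h | h <;> simp [h]
  · norm_num

private lemma gTrunc_le_one (g : ℕ → ℝ) (hvals : ∀ n, g n = 0 ∨ g n = 1) (y m n : ℕ) :
    gTrunc g y m n ≤ 1 := by
  apply Finset.prod_le_one
  · intro p _
    apply Finset.prod_nonneg
    intro a _
    split
    · rcases hvals (p ^ a) with h | h <;> simp [h]
    · norm_num
  · intro p _
    apply Finset.prod_le_one <;> intro a _
    · split
      · rcases hvals (p ^ a) with h | h <;> simp [h]
      · norm_num
    · split
      · rcases hvals (p ^ a) with h | h <;> simp [h]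
      · norm_num

private lemma gTrunc_periodic (g : ℕ → ℝ) (y m n : ℕ) :
    gTrunc g y m (n + (Nat.factorial y) ^ m) = gTrunc g y m n := by
  unfold gTrunc
  apply Finset.prod_congr rfl
  intro p hp
  simp only [Finset.mem_filter, Finset.mem_range] at hp
  apply Finset.prod_congr rfl
  intro a ha
  simp only [Finset.mem_Ico] at ha
  have hpdvd : ∀ b : ℕ, b ≤ m → p ^ b ∣ (Nat.factorial y) ^ m := fun b hb =>
    dvd_trans (pow_dvd_pow_of_dvd (Nat.dvd_factorial hp.2.pos hp.1.le) b) (pow_dvd_pow _ hb)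
  have e1 : (p ^ a ∣ n + (Nat.factorial y) ^ m) ↔ p ^ a ∣ n := by
    rw [Nat.add_comm n ((Nat.factorial y) ^ m)]
    exact Nat.dvd_add_right (hpdvd a (by omega))
  have e2 : (p ^ (a + 1) ∣ n + (Nat.factorial y) ^ m) ↔ p ^ (a + 1) ∣ n := by
    rw [Nat.add_comm n ((Nat.factorial y) ^ m)]
    exact Nat.dvd_add_right (hpdvd (a + 1) (by omega))
  rw [if_congr (and_congr e1 (not_congr e2)) rfl rfl]

private lemma gTrunc_eq (g : ℕ → ℝ) (hg1 : g 1 = 1)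
    (hgmul : ∀ a b : ℕ, Nat.Coprime a b → g (a * b) = g a * g b)
    (hvals : ∀ n, g n = 0 ∨ g n = 1) (y m : ℕ) {n : ℕ} (hn : n ≠ 0)
    (hbad : ¬ ∃ p : ℕ, p.Prime ∧
      ((y ≤ p ∧ g p = 0 ∧ p ∣ n) ∨ (y ≤ p ∧ p ^ 2 ∣ n) ∨ (p < y ∧ p ^ m ∣ n))) :
    g n = gTrunc g y m n := by
  push_neg at hbad
  have hfact : g n = ∏ p ∈ n.primeFactors, g (p ^ n.factorization p) := by
    simpa [Finsupp.prod] using Nat.multiplicative_factorization g hgmul hg1 hn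
  have hsplit : ∏ p ∈ n.primeFactors, g (p ^ n.factorization p)
      = ∏ p ∈ n.primeFactors.filter (· < y), g (p ^ n.factorization p) := by
    rw [← Finset.prod_filter_mul_prod_filter_not n.primeFactors (· < y)]
    have hone : ∏ p ∈ n.primeFactors.filter (fun p => ¬ p < y), g (p ^ n.factorization p) = 1 := by
      apply Finset.prod_eq_one
      intro p hp
      simp only [Finset.mem_filter, Nat.mem_primeFactors] at hp
      obtain ⟨⟨hpp, hpdvd, -⟩, hpy⟩ := hp
      have hy_le : y ≤ p := le_of_not_gt hpy
      have hge : 1 ≤ n.factorization p := by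
        rw [← Nat.Prime.pow_dvd_iff_le_factorization hpp hn]
        simpa using hpdvd
      have hv1 : n.factorization p = 1 := by
        by_contra hne
        have h2 : p ^ 2 ∣ n := (Nat.Prime.pow_dvd_iff_le_factorization hpp hn).2 (by omega)
        exact (hbad p hpp).2.1 hy_le h2
      rw [hv1, pow_one]
      rcases hvals p with h0 | h1
      · exact absurd hpdvd ((hbad p hpp).1 hy_le h0)
      · exact h1
    rw [hone, mul_one]
  have hinner : ∀ p : ℕ, p.Prime → p < y →
      (∏ a ∈ Finset.Ico 1 m, if p ^ a ∣ n ∧ ¬ p ^ (a + 1) ∣ n then g (p ^ a) else 1)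
      = if p ∣ n then g (p ^ n.factorization p) else 1 := by
    intro p hpp hpy
    have hpm : ¬ p ^ m ∣ n := fun hdvd => (hbad p hpp).2.2 hpy hdvd
    have hcond : ∀ a : ℕ, (p ^ a ∣ n ∧ ¬ p ^ (a + 1) ∣ n) ↔ a = n.factorization p := by
      intro a
      rw [Nat.Prime.pow_dvd_iff_le_factorization hpp hn,
        Nat.Prime.pow_dvd_iff_le_factorization hpp hn]
      omega
    have h1 : (∏ a ∈ Finset.Ico 1 m, if p ^ a ∣ n ∧ ¬ p ^ (a + 1) ∣ n then g (p ^ a) else 1)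
        = ∏ a ∈ Finset.Ico 1 m, if a = n.factorization p then g (p ^ a) else 1 :=
      Finset.prod_congr rfl (fun a _ => if_congr (hcond a) rfl rfl)
    rw [h1, Finset.prod_ite_eq' (Finset.Ico 1 m) (n.factorization p) (fun a => g (p ^ a))]
    by_cases hdvd : p ∣ n
    · have hge : 1 ≤ n.factorization p := by
        rw [← Nat.Prime.pow_dvd_iff_le_factorization hpp hn]
        simpa using hdvd
      have hlt : n.factorization p < m := by
        by_contra hge'
        exact hpm ((Nat.Prime.pow_dvd_iff_le_factorization hpp hn).2 (le_of_not_gt hge'))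
      simp [Finset.mem_Ico, hge, hlt, hdvd]
    · have h0 : n.factorization p = 0 := Nat.factorization_eq_zero_of_not_dvd hdvd
      simp [Finset.mem_Ico, h0, hdvd]
  have hgt : gTrunc g y m n
      = ∏ p ∈ ((Finset.range y).filter Nat.Prime).filter (· ∣ n), g (p ^ n.factorization p) := by
    unfold gTrunc
    rw [Finset.prod_congr rfl (fun p hp => hinner p (Finset.mem_filter.mp hp).2
      (Finset.mem_range.mp (Finset.mem_filter.mp hp).1))]
    exact (Finset.prod_filter _ _).symm
  have hsets : ((Finset.range y).filter Nat.Prime).filter (· ∣ n)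
      = n.primeFactors.filter (· < y) := by
    ext p
    simp only [Finset.mem_filter, Finset.mem_range, Nat.mem_primeFactors]
    constructor
    · rintro ⟨⟨h1, h2⟩, h3⟩
      exact ⟨⟨h2, h3, hn⟩, h1⟩
    · rintro ⟨⟨h1, h2, -⟩, h3⟩
      exact ⟨⟨h3, h1⟩, h2⟩
  rw [hfact, hsplit, hgt, hsets]


private lemma cesaro_of_periodic (F : ℕ → ℝ) (Q : ℕ) (hQ : 0 < Q)
    (hper : ∀ n, F (n + Q) = F n) (h0 : ∀ n, 0 ≤ F n) (h1 : ∀ n, F n ≤ 1) :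
    ∃ L : ℝ, Filter.Tendsto (fun x : ℕ => (∑ n ∈ Finset.Icc 1 x, F n) / x)
      Filter.atTop (nhds L) := by
  set S : ℝ := ∑ i ∈ Finset.range Q, F (1 + i) with hSdef
  have hblock : ∀ a : ℕ, ∑ i ∈ Finset.range Q, F (a + 1 + i) = S := by
    intro a
    induction a with
    | zero => simp [hSdef]
    | succ a ih =>
      have e1 : ∑ i ∈ Finset.range (Q + 1), F (a + 1 + i)
          = (∑ i ∈ Finset.range Q, F (a + 1 + i)) + F (a + 1 + Q) :=
        Finset.sum_range_succ _ _
      have e2 : ∑ i ∈ Finset.range (Q + 1), F (a + 1 + i)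
          = (∑ i ∈ Finset.range Q, F (a + 1 + (i + 1))) + F (a + 1 + 0) :=
        Finset.sum_range_succ' _ _
      have e3 : ∑ i ∈ Finset.range Q, F (a + 1 + (i + 1))
          = ∑ i ∈ Finset.range Q, F (a + 1 + 1 + i) := by
        apply Finset.sum_congr rfl
        intro i _
        congr 1
        omega
      have e4 : F (a + 1 + Q) = F (a + 1) := hper (a + 1)
      have goal_eq : ∑ i ∈ Finset.range Q, F (a + 1 + 1 + i)
          = ∑ i ∈ Finset.range Q, F (a + 1 + i) := by
        have := e1.symm.trans e2
        rw [e3] at this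
        simp only [Nat.add_zero] at this
        linarith [this, e4]
      calc ∑ i ∈ Finset.range Q, F (a + 1 + 1 + i)
          = ∑ i ∈ Finset.range Q, F (a + 1 + i) := goal_eq
        _ = S := ih
  have hmul : ∀ q : ℕ, ∑ i ∈ Finset.range (q * Q), F (1 + i) = q * S := by
    intro q
    induction q with
    | zero => simp
    | succ q ih =>
      rw [show (q + 1) * Q = q * Q + Q by ring, Finset.sum_range_add, ih]
      have hb : ∑ i ∈ Finset.range Q, F (1 + (q * Q + i)) = S := by
        rw [← hblock (q * Q)]
        apply Finset.sum_congr rfl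
        intro i _
        congr 1
        omega
      rw [hb]
      push_cast
      ring
  have hsum : ∀ x : ℕ, ∑ n ∈ Finset.Icc 1 x, F n = ∑ i ∈ Finset.range x, F (1 + i) := by
    intro x
    rw [show Finset.Icc 1 x = Finset.Ico 1 (x + 1) by rw [Finset.Ico_add_one_right_eq_Icc],
      Finset.sum_Ico_eq_sum_range]
    simp
  refine ⟨S / Q, ?_⟩
  rw [Metric.tendsto_atTop]
  intro ε hε
  obtain ⟨N, hN⟩ := exists_nat_gt ((2 * (Q : ℝ) + 1) / ε)
  refine ⟨max N 1, fun x hx => ?_⟩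
  have hx1 : 1 ≤ x := le_trans (le_max_right _ _) hx
  have hxN : (N : ℝ) ≤ (x : ℝ) := Nat.cast_le.2 (le_trans (le_max_left _ _) hx)
  set q := x / Q with hq
  set r := x % Q with hr
  have hxeq : x = q * Q + r := by
    rw [hq, hr]
    exact (Nat.div_add_mod' x Q).symm
  have hrQ : r < Q := Nat.mod_lt _ hQ
  set R : ℝ := ∑ i ∈ Finset.range r, F (1 + (q * Q + i)) with hRdef
  have hsum2 : ∑ n ∈ Finset.Icc 1 x, F n = q * S + R := by
    rw [hsum, hxeq, Finset.sum_range_add, hmul]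
  have hR0 : 0 ≤ R := Finset.sum_nonneg fun i _ => h0 _
  have hR1 : R ≤ (r : ℝ) := by
    calc R ≤ ∑ i ∈ Finset.range r, (1 : ℝ) := Finset.sum_le_sum fun i _ => h1 _
      _ = (r : ℝ) := by simp
  have hS0 : 0 ≤ S := Finset.sum_nonneg fun i _ => h0 _
  have hS1 : S ≤ (Q : ℝ) := by
    calc S ≤ ∑ i ∈ Finset.range Q, (1 : ℝ) := Finset.sum_le_sum fun i _ => h1 _
      _ = (Q : ℝ) := by simp
  have hxpos : (0 : ℝ) < x := by exact_mod_cast hx1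
  have hQpos : (0 : ℝ) < Q := by exact_mod_cast hQ
  have hxr : (x : ℝ) = (q : ℝ) * Q + r := by
    rw [hxeq]
    push_cast
    ring
  rw [Real.dist_eq, hsum2]
  have expand : ((q : ℝ) * S + R) / x - S / Q = ((Q : ℝ) * R - (r : ℝ) * S) / ((x : ℝ) * Q) := by
    rw [div_sub_div _ _ hxpos.ne' hQpos.ne']
    congr 1
    rw [hxr]
    ring
  rw [expand, abs_div, abs_of_pos (mul_pos hxpos hQpos)]
  have hnum : |(Q : ℝ) * R - (r : ℝ) * S| ≤ 2 * Q * Q := by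
    rw [abs_le]
    constructor
    · nlinarith [(Nat.cast_le (α := ℝ)).2 hrQ.le]
    · nlinarith [(Nat.cast_le (α := ℝ)).2 hrQ.le]
  have hrle : (r : ℝ) ≤ Q := by exact_mod_cast hrQ.le
  calc |(Q : ℝ) * R - (r : ℝ) * S| / ((x : ℝ) * Q) ≤ (2 * Q * Q) / ((x : ℝ) * Q) := by
        gcongr
    _ = 2 * Q / x := by
        field_simp
    _ < ε := by
        rw [div_lt_iff₀ hxpos]
        have hx2 : (2 * (Q : ℝ) + 1) / ε < x := lt_of_lt_of_le hN hxN
        rw [div_lt_iff₀ hε] at hx2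
        nlinarith

private lemma ite_nonneg' (c : Prop) [Decidable c] : (0:ℝ) ≤ if c then 1 else 0 := by
  split <;> norm_num

private lemma sum_ite_static_dvd_le (x c H d : ℕ) (hd : 0 < d) (hcH : c ≤ H)
    (s : Prop) [Decidable s] :
    ∑ n ∈ Finset.Icc 1 x, (if s ∧ d ∣ (n + c) then (1:ℝ) else 0)
      ≤ ((x:ℝ) + H) * (if s then ((d:ℝ))⁻¹ else 0) := by
  by_cases hs : s
  · simp only [hs, true_and, if_true]
    calc ∑ n ∈ Finset.Icc 1 x, (if d ∣ (n + c) then (1:ℝ) else 0)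
        ≤ ((x:ℝ) + c) / d := sum_ite_dvd_le x c d hd
      _ ≤ ((x:ℝ) + H) / d := by
          have hcH' : (c:ℝ) ≤ (H:ℝ) := by exact_mod_cast hcH
          gcongr
      _ = ((x:ℝ) + H) * ((d:ℝ))⁻¹ := div_eq_mul_inv _ _
  · simp [hs]

set_option maxHeartbeats 2000000 in
/-- **Pretentious `{0,1}`-valued multiplicative functions have a unique Furstenberg
system:** all correlation limits `lim_{x→∞} (1/x) ∑_{n ≤ x} g(n+h₁) ⋯ g(n+h_k)` exist. -/
theorem pretentious_unique_furstenberg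
    (g : ℕ → ℝ) (hvals : ∀ n, g n = 0 ∨ g n = 1)
    (hmult : g 1 = 1 ∧ ∀ m n : ℕ, Nat.Coprime m n → g (m * n) = g m * g n)
    (hpret : IsPretentious (fun n => (g n : ℂ)))
    (k : ℕ) (hk : 1 ≤ k) (h : Fin k → ℕ)
    (hh : ∀ j, 0 < h j) (hinj : Function.Injective h) :
    ∃ L : ℝ, Filter.Tendsto
      (fun x : ℕ => (∑ n ∈ Finset.Icc 1 x, ∏ j, g (n + h j)) / (x : ℝ))
      Filter.atTop (nhds L) := by
  classical
  obtain ⟨hg1, hgmul⟩ := hmult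
  set H : ℕ := Finset.univ.sup h with hHdef
  have hjH : ∀ j, h j ≤ H := fun j => Finset.le_sup (Finset.mem_univ j)
  set u1 : ℕ → ℝ := fun p => if p.Prime ∧ g p = 0 then (p:ℝ)⁻¹ else 0 with hu1def
  set u2 : ℕ → ℝ := fun p => if p.Prime then (((p:ℝ))^2)⁻¹ else 0 with hu2def
  have hu1s : Summable u1 := summable_u1 g hvals hpret
  have hu2s : Summable u2 := by
    apply Summable.of_nonneg_of_le (f := fun p : ℕ => (((p:ℝ))^2)⁻¹)
    · intro p
      simp only [hu2def]
      split <;> positivity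
    · intro p
      simp only [hu2def]
      split
      · exact le_refl _
      · positivity
    · simpa [one_div] using Real.summable_one_div_nat_pow.mpr one_lt_two
  set u : ℕ → ℝ := fun p => u1 p + u2 p with hudef
  have hu1nn : ∀ p, 0 ≤ u1 p := fun p => by simp only [hu1def]; split <;> positivity
  have hu2nn : ∀ p, 0 ≤ u2 p := fun p => by simp only [hu2def]; split <;> positivity
  have hu0 : ∀ p, 0 ≤ u p := fun p => add_nonneg (hu1nn p) (hu2nn p)
  have hus : Summable u := hu1s.add hu2s
  set A : ℕ → ℝ := fun x : ℕ => (∑ n ∈ Finset.Icc 1 x, ∏ j, g (n + h j)) / (x:ℝ) with hAdef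
  suffices hc : CauchySeq A by
    obtain ⟨L, hL⟩ := cauchySeq_tendsto_of_complete hc
    exact ⟨L, hL⟩
  rw [Metric.cauchySeq_iff]
  intro ε hε
  set δ : ℝ := ε / (8 * k + 3) with hδdef
  have hδ : 0 < δ := by positivity
  obtain ⟨y, hy⟩ : ∃ y : ℕ, ∑' kk, u (kk + y) < δ :=
    ((tendsto_order.1 (tendsto_sum_nat_add u)).2 δ hδ).exists
  obtain ⟨m, hm1, hm⟩ : ∃ m : ℕ, 1 ≤ m ∧ (y:ℝ) * ((2:ℝ)^m)⁻¹ < δ := by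
    have h2 : Tendsto (fun m : ℕ => ((2:ℝ)^m)⁻¹) atTop (nhds 0) :=
      (tendsto_pow_atTop_atTop_of_one_lt one_lt_two).inv_tendsto_atTop
    have h3 : Tendsto (fun m : ℕ => (y:ℝ) * ((2:ℝ)^m)⁻¹) atTop (nhds 0) := by
      simpa using h2.const_mul (y:ℝ)
    obtain ⟨m, hm⟩ := (((tendsto_order.1 h3).2 δ hδ).and (eventually_ge_atTop 1)).exists
    exact ⟨m, hm.2, hm.1⟩
  set Q : ℕ := (Nat.factorial y) ^ m with hQdef
  have hQ0 : 0 < Q := pow_pos (Nat.factorial_pos y) m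
  set F : ℕ → ℝ := fun n => ∏ j, gTrunc g y m (n + h j) with hFdef
  have hFper : ∀ n, F (n + Q) = F n := by
    intro n
    apply Finset.prod_congr rfl
    intro j _
    rw [show n + Q + h j = (n + h j) + Q by omega]
    exact gTrunc_periodic g y m (n + h j)
  have hF0 : ∀ n, 0 ≤ F n :=
    fun n => Finset.prod_nonneg fun j _ => gTrunc_nonneg g hvals y m _
  have hF1 : ∀ n, F n ≤ 1 :=
    fun n => Finset.prod_le_one (fun j _ => gTrunc_nonneg g hvals y m _)
      (fun j _ => gTrunc_le_one g hvals y m _)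
  obtain ⟨L', hL'⟩ := cesaro_of_periodic F Q hQ0 hFper hF0 hF1
  set B : ℕ → ℝ := fun x : ℕ => (∑ n ∈ Finset.Icc 1 x, F n) / (x:ℝ) with hBdef
  have hL2 : Tendsto B atTop (nhds L') := hL'
  set w1 : ℕ → ℝ := fun p => if p.Prime ∧ y ≤ p ∧ g p = 0 then (p:ℝ)⁻¹ else 0 with hw1def
  set w2 : ℕ → ℝ := fun p => if p.Prime ∧ y ≤ p then (((p:ℝ)^2))⁻¹ else 0 with hw2def
  set w3 : ℕ → ℝ := fun p => if p.Prime ∧ p < y then (((p:ℝ)^m))⁻¹ else 0 with hw3def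
  have herr : ∀ x : ℕ, 1 ≤ x → H ≤ x → |A x - B x| ≤ 4 * k * δ := by
    intro x hx1 hxH
    have hxpos : (0:ℝ) < x := by exact_mod_cast hx1
    set P : Finset ℕ := Finset.range (x + H + 1) with hPdef
    have hdiff : ∀ n ∈ Finset.Icc 1 x, |(∏ j, g (n + h j)) - F n| ≤
        ∑ j : Fin k, (if (∃ p : ℕ, p.Prime ∧
          ((y ≤ p ∧ g p = 0 ∧ p ∣ (n + h j)) ∨ (y ≤ p ∧ p^2 ∣ (n + h j)) ∨
            (p < y ∧ p^m ∣ (n + h j)))) then (1:ℝ) else 0) := by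
      intro n hn
      simp only [Finset.mem_Icc] at hn
      by_cases hB : ∃ j : Fin k, ∃ p : ℕ, p.Prime ∧
          ((y ≤ p ∧ g p = 0 ∧ p ∣ (n + h j)) ∨ (y ≤ p ∧ p^2 ∣ (n + h j)) ∨
            (p < y ∧ p^m ∣ (n + h j)))
      · obtain ⟨j₀, hj₀⟩ := hB
        have hge : (1:ℝ) ≤ ∑ j : Fin k, (if (∃ p : ℕ, p.Prime ∧
            ((y ≤ p ∧ g p = 0 ∧ p ∣ (n + h j)) ∨ (y ≤ p ∧ p^2 ∣ (n + h j)) ∨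
              (p < y ∧ p^m ∣ (n + h j)))) then (1:ℝ) else 0) := by
          have hs := Finset.single_le_sum (f := fun j : Fin k => (if (∃ p : ℕ, p.Prime ∧
            ((y ≤ p ∧ g p = 0 ∧ p ∣ (n + h j)) ∨ (y ≤ p ∧ p^2 ∣ (n + h j)) ∨
              (p < y ∧ p^m ∣ (n + h j)))) then (1:ℝ) else 0))
            (fun j _ => ite_nonneg' _) (Finset.mem_univ j₀)
          beta_reduce at hs
          rwa [if_pos hj₀] at hs
        have hp0 : 0 ≤ ∏ j, g (n + h j) :=
          Finset.prod_nonneg fun j _ => by rcases hvals (n + h j) with h' | h' <;> simp [h']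
        have hp1 : (∏ j, g (n + h j)) ≤ 1 :=
          Finset.prod_le_one (fun j _ => by rcases hvals (n + h j) with h' | h' <;> simp [h'])
            (fun j _ => by rcases hvals (n + h j) with h' | h' <;> simp [h'])
        have hq0 := hF0 n
        have hq1 := hF1 n
        rw [abs_le]
        constructor <;> linarith
      · rw [not_exists] at hB
        have heq : ∀ j : Fin k, g (n + h j) = gTrunc g y m (n + h j) := fun j =>
          gTrunc_eq g hg1 hgmul hvals y m (by omega : n + h j ≠ 0) (hB j)
        have hpe : (∏ j, g (n + h j)) = F n := Finset.prod_congr rfl fun j _ => heq j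
        rw [hpe, sub_self, abs_zero]
        exact Finset.sum_nonneg fun j _ => ite_nonneg' _
    have E2 : ∀ j : Fin k, ∀ n ∈ Finset.Icc 1 x,
        (if (∃ p : ℕ, p.Prime ∧
          ((y ≤ p ∧ g p = 0 ∧ p ∣ (n + h j)) ∨ (y ≤ p ∧ p^2 ∣ (n + h j)) ∨
            (p < y ∧ p^m ∣ (n + h j)))) then (1:ℝ) else 0) ≤
        ∑ p ∈ P, ((if (p.Prime ∧ y ≤ p ∧ g p = 0) ∧ p ∣ (n + h j) then (1:ℝ) else 0)
          + (if (p.Prime ∧ y ≤ p) ∧ p^2 ∣ (n + h j) then (1:ℝ) else 0)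
          + (if (p.Prime ∧ p < y) ∧ p^m ∣ (n + h j) then (1:ℝ) else 0)) := by
      intro j n hn
      simp only [Finset.mem_Icc] at hn
      have hterm_nn : ∀ p : ℕ, (0:ℝ) ≤
          ((if (p.Prime ∧ y ≤ p ∧ g p = 0) ∧ p ∣ (n + h j) then (1:ℝ) else 0)
          + (if (p.Prime ∧ y ≤ p) ∧ p^2 ∣ (n + h j) then (1:ℝ) else 0)
          + (if (p.Prime ∧ p < y) ∧ p^m ∣ (n + h j) then (1:ℝ) else 0)) := fun p =>
        add_nonneg (add_nonneg (ite_nonneg' _) (ite_nonneg' _)) (ite_nonneg' _)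
      split
      · next hex =>
        obtain ⟨p, hpp, hcase⟩ := hex
        have hpdvd : p ∣ n + h j := by
          rcases hcase with ⟨-, -, hd⟩ | ⟨-, hd⟩ | ⟨-, hd⟩
          · exact hd
          · exact dvd_trans (dvd_pow_self p two_ne_zero) hd
          · exact dvd_trans (dvd_pow_self p (by omega : m ≠ 0)) hd
        have hple : p ≤ n + h j := Nat.le_of_dvd (by omega) hpdvd
        have hpP : p ∈ P := by
          simp only [hPdef, Finset.mem_range]
          have := hjH j
          omega
        refine le_trans ?_ (Finset.single_le_sum (fun p _ => hterm_nn p) hpP)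
        rcases hcase with h1 | h2 | h3
        · have he : (if (p.Prime ∧ y ≤ p ∧ g p = 0) ∧ p ∣ (n + h j) then (1:ℝ) else 0) = 1 :=
            if_pos ⟨⟨hpp, h1.1, h1.2.1⟩, h1.2.2⟩
          linarith [ite_nonneg' ((p.Prime ∧ y ≤ p) ∧ p^2 ∣ (n + h j)),
            ite_nonneg' ((p.Prime ∧ p < y) ∧ p^m ∣ (n + h j))]
        · have he : (if (p.Prime ∧ y ≤ p) ∧ p^2 ∣ (n + h j) then (1:ℝ) else 0) = 1 :=
            if_pos ⟨⟨hpp, h2.1⟩, h2.2⟩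
          linarith [ite_nonneg' ((p.Prime ∧ y ≤ p ∧ g p = 0) ∧ p ∣ (n + h j)),
            ite_nonneg' ((p.Prime ∧ p < y) ∧ p^m ∣ (n + h j))]
        · have he : (if (p.Prime ∧ p < y) ∧ p^m ∣ (n + h j) then (1:ℝ) else 0) = 1 :=
            if_pos ⟨⟨hpp, h3.1⟩, h3.2⟩
          linarith [ite_nonneg' ((p.Prime ∧ y ≤ p ∧ g p = 0) ∧ p ∣ (n + h j)),
            ite_nonneg' ((p.Prime ∧ y ≤ p) ∧ p^2 ∣ (n + h j))]
      · exact Finset.sum_nonneg fun p _ => hterm_nn p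
    have E3 : ∀ j : Fin k, ∀ p : ℕ,
        ∑ n ∈ Finset.Icc 1 x, ((if (p.Prime ∧ y ≤ p ∧ g p = 0) ∧ p ∣ (n + h j) then (1:ℝ) else 0)
          + (if (p.Prime ∧ y ≤ p) ∧ p^2 ∣ (n + h j) then (1:ℝ) else 0)
          + (if (p.Prime ∧ p < y) ∧ p^m ∣ (n + h j) then (1:ℝ) else 0))
        ≤ ((x:ℝ) + H) * (w1 p + w2 p + w3 p) := by
      intro j p
      have hane : ∑ n ∈ Finset.Icc 1 x,
          ((if (p.Prime ∧ y ≤ p ∧ g p = 0) ∧ p ∣ (n + h j) then (1:ℝ) else 0)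
          + (if (p.Prime ∧ y ≤ p) ∧ p^2 ∣ (n + h j) then (1:ℝ) else 0)
          + (if (p.Prime ∧ p < y) ∧ p^m ∣ (n + h j) then (1:ℝ) else 0))
          = (∑ n ∈ Finset.Icc 1 x, (if (p.Prime ∧ y ≤ p ∧ g p = 0) ∧ p ∣ (n + h j) then (1:ℝ) else 0))
          + (∑ n ∈ Finset.Icc 1 x, (if (p.Prime ∧ y ≤ p) ∧ p^2 ∣ (n + h j) then (1:ℝ) else 0))
          + (∑ n ∈ Finset.Icc 1 x, (if (p.Prime ∧ p < y) ∧ p^m ∣ (n + h j) then (1:ℝ) else 0)) := by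
        rw [← Finset.sum_add_distrib, ← Finset.sum_add_distrib]
      rw [hane]
      by_cases hpp : p.Prime
      · have b1 := sum_ite_static_dvd_le x (h j) H p hpp.pos (hjH j) (p.Prime ∧ y ≤ p ∧ g p = 0)
        have b2 := sum_ite_static_dvd_le x (h j) H (p^2) (pow_pos hpp.pos 2) (hjH j) (p.Prime ∧ y ≤ p)
        have b3 := sum_ite_static_dvd_le x (h j) H (p^m) (pow_pos hpp.pos m) (hjH j) (p.Prime ∧ p < y)
        have c1 : (if (p.Prime ∧ y ≤ p ∧ g p = 0) then ((p:ℕ):ℝ)⁻¹ else 0) = w1 p := by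
          simp only [hw1def]
        have c2 : (if (p.Prime ∧ y ≤ p) then (((p^2 : ℕ)):ℝ)⁻¹ else 0) = w2 p := by
          simp only [hw2def]
          split
          · push_cast
            ring
          · rfl
        have c3 : (if (p.Prime ∧ p < y) then (((p^m : ℕ)):ℝ)⁻¹ else 0) = w3 p := by
          simp only [hw3def]
          split
          · push_cast
            ring
          · rfl
        rw [c1] at b1
        rw [c2] at b2
        rw [c3] at b3
        calc _ ≤ ((x:ℝ) + H) * w1 p + ((x:ℝ) + H) * w2 p + ((x:ℝ) + H) * w3 p :=
              add_le_add (add_le_add b1 b2) b3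
          _ = ((x:ℝ) + H) * (w1 p + w2 p + w3 p) := by ring
      · have hz1 : ∀ n ∈ Finset.Icc 1 x,
            (if (p.Prime ∧ y ≤ p ∧ g p = 0) ∧ p ∣ (n + h j) then (1:ℝ) else 0) = 0 := by
          intro n _
          rw [if_neg (by tauto)]
        have hz2 : ∀ n ∈ Finset.Icc 1 x,
            (if (p.Prime ∧ y ≤ p) ∧ p^2 ∣ (n + h j) then (1:ℝ) else 0) = 0 := by
          intro n _
          rw [if_neg (by tauto)]
        have hz3 : ∀ n ∈ Finset.Icc 1 x,
            (if (p.Prime ∧ p < y) ∧ p^m ∣ (n + h j) then (1:ℝ) else 0) = 0 := by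
          intro n _
          rw [if_neg (by tauto)]
        have hww1 : w1 p = 0 := by simp only [hw1def]; rw [if_neg (by tauto)]
        have hww2 : w2 p = 0 := by simp only [hw2def]; rw [if_neg (by tauto)]
        have hww3 : w3 p = 0 := by simp only [hw3def]; rw [if_neg (by tauto)]
        rw [Finset.sum_congr rfl hz1, Finset.sum_congr rfl hz2, Finset.sum_congr rfl hz3,
          hww1, hww2, hww3]
        simp
    have hW12 : ∑ p ∈ P, (w1 p + w2 p) ≤ δ := by
      have hpw : ∀ p ∈ P, w1 p + w2 p ≤ (if y ≤ p then u p else 0) := by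
        intro p _
        by_cases hyp : y ≤ p
        · rw [if_pos hyp]
          simp only [hudef]
          apply add_le_add
          · simp only [hw1def, hu1def]
            split_ifs with ha hb
            · exact le_refl _
            · exact absurd ⟨ha.1, ha.2.2⟩ hb
            · positivity
            · exact le_refl _
          · simp only [hw2def, hu2def]
            split_ifs with ha hb
            · exact le_refl _
            · exact absurd ha.1 hb
            · positivity
            · exact le_refl _
        · rw [if_neg hyp]
          have e1 : w1 p = 0 := by simp only [hw1def]; rw [if_neg (by tauto)]
          have e2 : w2 p = 0 := by simp only [hw2def]; rw [if_neg (by tauto)]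
          rw [e1, e2]
          norm_num
      calc ∑ p ∈ P, (w1 p + w2 p) ≤ ∑ p ∈ P, (if y ≤ p then u p else 0) :=
            Finset.sum_le_sum hpw
        _ ≤ ∑' kk, u (kk + y) := sum_tail_le hu0 hus y P
        _ ≤ δ := hy.le
    have hW3 : ∑ p ∈ P, w3 p ≤ δ := by
      have hpw : ∀ p ∈ P, w3 p ≤ (if p < y then ((2:ℝ)^m)⁻¹ else 0) := by
        intro p _
        simp only [hw3def]
        split_ifs with ha hb
        · apply inv_anti₀ (by positivity)
          have h2p : (2:ℝ) ≤ (p:ℝ) := by exact_mod_cast ha.1.two_le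
          exact pow_le_pow_left₀ (by norm_num) h2p m
        · exact absurd ha.2 hb
        · positivity
        · exact le_refl _
      have hcard : ((P.filter (· < y)).card : ℝ) ≤ (y:ℝ) := by
        have hsub : P.filter (· < y) ⊆ Finset.range y := by
          intro p hp
          simp only [Finset.mem_filter] at hp
          exact Finset.mem_range.2 hp.2
        have := (Finset.card_le_card hsub).trans_eq (Finset.card_range y)
        exact_mod_cast this
      calc ∑ p ∈ P, w3 p ≤ ∑ p ∈ P, (if p < y then ((2:ℝ)^m)⁻¹ else 0) :=
            Finset.sum_le_sum hpw
        _ = ∑ p ∈ P.filter (· < y), ((2:ℝ)^m)⁻¹ := (Finset.sum_filter _ _).symm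
        _ = ((P.filter (· < y)).card : ℝ) * ((2:ℝ)^m)⁻¹ := by
            rw [Finset.sum_const, nsmul_eq_mul]
        _ ≤ (y:ℝ) * ((2:ℝ)^m)⁻¹ := mul_le_mul_of_nonneg_right hcard (by positivity)
        _ ≤ δ := hm.le
    have main : ∑ n ∈ Finset.Icc 1 x, |(∏ j, g (n + h j)) - F n|
        ≤ (k:ℝ) * (((x:ℝ) + H) * (2 * δ)) := by
      calc ∑ n ∈ Finset.Icc 1 x, |(∏ j, g (n + h j)) - F n|
          ≤ ∑ n ∈ Finset.Icc 1 x, ∑ j : Fin k, (if (∃ p : ℕ, p.Prime ∧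
              ((y ≤ p ∧ g p = 0 ∧ p ∣ (n + h j)) ∨ (y ≤ p ∧ p^2 ∣ (n + h j)) ∨
                (p < y ∧ p^m ∣ (n + h j)))) then (1:ℝ) else 0) := Finset.sum_le_sum hdiff
        _ = ∑ j : Fin k, ∑ n ∈ Finset.Icc 1 x, (if (∃ p : ℕ, p.Prime ∧
              ((y ≤ p ∧ g p = 0 ∧ p ∣ (n + h j)) ∨ (y ≤ p ∧ p^2 ∣ (n + h j)) ∨
                (p < y ∧ p^m ∣ (n + h j)))) then (1:ℝ) else 0) := Finset.sum_comm
        _ ≤ ∑ j : Fin k, ∑ n ∈ Finset.Icc 1 x,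
              ∑ p ∈ P, ((if (p.Prime ∧ y ≤ p ∧ g p = 0) ∧ p ∣ (n + h j) then (1:ℝ) else 0)
              + (if (p.Prime ∧ y ≤ p) ∧ p^2 ∣ (n + h j) then (1:ℝ) else 0)
              + (if (p.Prime ∧ p < y) ∧ p^m ∣ (n + h j) then (1:ℝ) else 0)) :=
            Finset.sum_le_sum (fun j _ => Finset.sum_le_sum (fun n hn => E2 j n hn))
        _ = ∑ j : Fin k, ∑ p ∈ P, ∑ n ∈ Finset.Icc 1 x,
              ((if (p.Prime ∧ y ≤ p ∧ g p = 0) ∧ p ∣ (n + h j) then (1:ℝ) else 0)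
              + (if (p.Prime ∧ y ≤ p) ∧ p^2 ∣ (n + h j) then (1:ℝ) else 0)
              + (if (p.Prime ∧ p < y) ∧ p^m ∣ (n + h j) then (1:ℝ) else 0)) :=
            Finset.sum_congr rfl (fun j _ => Finset.sum_comm)
        _ ≤ ∑ j : Fin k, ∑ p ∈ P, ((x:ℝ) + H) * (w1 p + w2 p + w3 p) :=
            Finset.sum_le_sum (fun j _ => Finset.sum_le_sum (fun p _ => E3 j p))
        _ = (k:ℝ) * (((x:ℝ) + H) * ∑ p ∈ P, (w1 p + w2 p + w3 p)) := by
            rw [← Finset.mul_sum, Finset.sum_const, Finset.card_univ, Fintype.card_fin,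
              nsmul_eq_mul]
        _ ≤ (k:ℝ) * (((x:ℝ) + H) * (2 * δ)) := by
            apply mul_le_mul_of_nonneg_left ?_ (Nat.cast_nonneg k)
            apply mul_le_mul_of_nonneg_left ?_ (by positivity)
            have hsplit : ∑ p ∈ P, (w1 p + w2 p + w3 p)
                = ∑ p ∈ P, (w1 p + w2 p) + ∑ p ∈ P, w3 p := by
              rw [← Finset.sum_add_distrib]
            rw [hsplit]
            linarith
    have hstep : |A x - B x| ≤ ((k:ℝ) * (((x:ℝ) + H) * (2 * δ))) / x := by
      have hsub : A x - B x = (∑ n ∈ Finset.Icc 1 x, ((∏ j, g (n + h j)) - F n)) / x := by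
        simp only [hAdef, hBdef]
        rw [Finset.sum_sub_distrib, sub_div]
      rw [hsub, abs_div, abs_of_pos hxpos]
      have habs : |∑ n ∈ Finset.Icc 1 x, ((∏ j, g (n + h j)) - F n)|
          ≤ (k:ℝ) * (((x:ℝ) + H) * (2 * δ)) :=
        le_trans (Finset.abs_sum_le_sum_abs _ _) main
      gcongr
    have hfinal : ((k:ℝ) * (((x:ℝ) + H) * (2 * δ))) / x ≤ 4 * k * δ := by
      rw [div_le_iff₀ hxpos]
      have hHx : (H:ℝ) ≤ x := by exact_mod_cast hxH
      nlinarith [mul_nonneg (mul_nonneg (Nat.cast_nonneg (α := ℝ) k) hδ.le)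
        (sub_nonneg.2 hHx), hδ.le, Nat.cast_nonneg (α := ℝ) k]
    linarith
  rw [Metric.tendsto_atTop] at hL2
  obtain ⟨N₂, hN₂⟩ := hL2 δ hδ
  refine ⟨max (max N₂ H) 1, fun a ha b hb => ?_⟩
  have ha1 : 1 ≤ a := le_trans (le_max_right _ _) ha
  have haH : H ≤ a := le_trans (le_trans (le_max_right _ _) (le_max_left _ _)) ha
  have haN : N₂ ≤ a := le_trans (le_trans (le_max_left _ _) (le_max_left _ _)) ha
  have hb1 : 1 ≤ b := le_trans (le_max_right _ _) hb
  have hbH : H ≤ b := le_trans (le_trans (le_max_right _ _) (le_max_left _ _)) hb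
  have hbN : N₂ ≤ b := le_trans (le_trans (le_max_left _ _) (le_max_left _ _)) hb
  have e1 := herr a ha1 haH
  have e2 := herr b hb1 hbH
  have e3 := hN₂ a haN
  have e4 := hN₂ b hbN
  rw [Real.dist_eq] at e3 e4 ⊢
  have hdecomp : A a - A b = (A a - B a) + (B a - L') + (L' - B b) + (B b - A b) := by ring
  have hchain : |A a - A b| ≤ |A a - B a| + |B a - L'| + |L' - B b| + |B b - A b| := by
    rw [hdecomp]
    calc |(A a - B a) + (B a - L') + (L' - B b) + (B b - A b)|
        ≤ |(A a - B a) + (B a - L') + (L' - B b)| + |B b - A b| := abs_add_le _ _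
      _ ≤ |(A a - B a) + (B a - L')| + |L' - B b| + |B b - A b| := by
          linarith [abs_add_le ((A a - B a) + (B a - L')) (L' - B b)]
      _ ≤ |A a - B a| + |B a - L'| + |L' - B b| + |B b - A b| := by
          linarith [abs_add_le (A a - B a) (B a - L')]
  have h5 : |L' - B b| = |B b - L'| := abs_sub_comm _ _
  have h6 : |B b - A b| = |A b - B b| := abs_sub_comm _ _
  have hεδ : ε = (8 * k + 3) * δ := by
    rw [hδdef]
    field_simp
  rw [h5, h6] at hchain
  have hk0 : (0:ℝ) ≤ (k:ℝ) := Nat.cast_nonneg k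
  calc |A a - A b| ≤ (4 * k * δ) + δ + δ + (4 * k * δ) := by linarith
    _ < ε := by rw [hεδ]; nlinarith
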